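/- Let R be an associative ℝ-algebra with an involution * (star ring with ℝ-linear star), and let b, c ∈ R satisfy b·c = c·b. Let A, B be real numbers with 0 < B < A, set S = √(A² − B²) and α = (A − S)/B. Then A·(b*b + c*c) + B·(b*c* + bc) = (S/(1−α²))·((b* + α c)(b + α c*) + (c* + α b)(c + α b*)) − ((A − S)/2)·((bb* − b*b) + (cc* − c*c)). -/

import Mathlib

/-- The algebraic identity underlying the diagonalization of the Bogoliubov
Hamiltonian, in an associative ℝ-algebra with an ℝ-linear involution `star`.
Here `b` and `c` play the roles of the modified annihilation operators
`b_p` and `b_{-p}`. -/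
theorem statement8 {R : Type*} [Ring R] [Algebra ℝ R] [StarRing R] [StarModule ℝ R]
    (b c : R) (hbc : b * c = c * b)
    (A B : ℝ) (hB : 0 < B) (hBA : B < A)
    (S α : ℝ) (hS : S = Real.sqrt (A ^ 2 - B ^ 2)) (hα : α = (A - S) / B) :
    A • (star b * b + star c * c) + B • (star b * star c + b * c) =
      (S / (1 - α ^ 2)) •
          ((star b + α • c) * (b + α • star c) + (star c + α • b) * (c + α • star b)) -
        ((A - S) / 2) • ((b * star b - star b * b) + (c * star c - star c * c)) := by
  have hB2 : (0:ℝ) < A ^ 2 - B ^ 2 := by nlinarith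
  have hS2 : S ^ 2 = A ^ 2 - B ^ 2 := by
    rw [hS, Real.sq_sqrt hB2.le]
  have hSpos : 0 < S := by rw [hS]; exact Real.sqrt_pos.mpr hB2
  have hSA : S < A := by nlinarith
  have hAS : 0 < A - S := by linarith
  have h1α : 1 - α ^ 2 = 2 * S * (A - S) / B ^ 2 := by
    rw [hα]; field_simp; nlinarith
  have hk : S / (1 - α ^ 2) = B ^ 2 / (2 * (A - S)) := by
    rw [h1α]; field_simp; try ring
  have h2 : star c * star b = star b * star c := by
    have := congrArg star hbc
    simpa [star_mul] using this
  have expand : (star b + α • c) * (b + α • star c) + (star c + α • b) * (c + α • star b)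
      = (star b * b + star c * c) + (2*α) • (star b * star c + b * c)
        + (α^2) • (b * star b + c * star c) := by
    simp only [mul_add, add_mul, smul_mul_assoc, mul_smul_comm, smul_smul, ← hbc, h2]
    module
  rw [expand]
  rw [hk]
  have hASne : A - S ≠ 0 := ne_of_gt hAS
  have hBne : B ≠ 0 := ne_of_gt hB
  match_scalars <;> (try simp only [hα]) <;> field_simp <;> (ring_nf; try linarith [hS2])
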